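/- Let λ be a complex (signed, finite) measure on U_{n+1} = {y ∈ ℝ^{n+1} : Σ yᵢ > 0} with λ ≪ μ, where μ = (Σᵢ yᵢ)^{-(n+1)} λ_{ℝ^{n+1}} (i.e., μ has density (Σ yᵢ)^{-(n+1)} with respect to Lebesgue measure restricted to U_{n+1}); equivalently λ ≪ λ_{ℝ^{n+1}}|_{U_{n+1}}. Then the pushforward H∗λ under the homogeneous transform H(y) = y/(Σ yᵢ) is absolutely continuous with respect to the (n-dimensional Hausdorff / surface) measure μ_{P_n} on the hyperplane P_n = {y : Σ yᵢ = 1}. -/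

import Mathlib

open MeasureTheory
open scoped ENNReal BigOperators

/-- If `lam` is a signed (finite) measure on `ℝ^{n+1}` absolutely continuous with respect to
Lebesgue measure restricted to the half-space `U_{n+1} = {y : Σ yᵢ > 0}` (equivalently
absolutely continuous w.r.t. `μ = (Σ yᵢ)^{-(n+1)}·λ` on `U_{n+1}`), then its pushforward by
the homogeneous transform `H(y) = y/(Σ yᵢ)` is absolutely continuous with respect to the
surface measure `μ_{P_n}` on the hyperplane `P_n = {y : Σ yᵢ = 1}`, the pushforward of
`√(n+1)·λ_{ℝⁿ}` by the chart `x ↦ (x₁,…,xₙ, 1−Σxᵢ)`. -/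
theorem stmt15 (n : ℕ) (hn : 1 ≤ n) :
    let H : (Fin (n+1) → ℝ) → (Fin (n+1) → ℝ) := fun y i => y i / ∑ j, y j
    let U : Set (Fin (n+1) → ℝ) := {y | 0 < ∑ i, y i}
    let chart : (Fin n → ℝ) → (Fin (n+1) → ℝ) :=
      fun x => Fin.snoc x (1 - ∑ j, x j)
    let μP : Measure (Fin (n+1) → ℝ) :=
      ((ENNReal.ofReal (Real.sqrt (n+1))) • (volume : Measure (Fin n → ℝ))).map chart
    ∀ lam : SignedMeasure (Fin (n+1) → ℝ),
      (∀ E : Set (Fin (n+1) → ℝ), MeasurableSet E → volume (E ∩ U) = 0 → lam E = 0) →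
      ∀ E : Set (Fin (n+1) → ℝ), MeasurableSet E → μP E = 0 → (lam.map H) E = 0 := by
  intro H U chart μP lam hlam E hE hμP
  -- basic measurability facts
  have hchart : Measurable chart := by
    rw [measurable_pi_iff]
    intro i
    refine Fin.lastCases ?_ ?_ i
    · simp only [chart, Fin.snoc_last]
      exact measurable_const.sub (Finset.measurable_sum _ fun j _ => measurable_pi_apply j)
    · intro j
      simp only [chart, Fin.snoc_castSucc]
      exact measurable_pi_apply j
  have hinit : Measurable (Fin.init : (Fin (n+1) → ℝ) → (Fin n → ℝ)) :=
    measurable_pi_iff.2 fun i => measurable_pi_apply _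
  have hH : Measurable H := by
    rw [measurable_pi_iff]
    intro i
    exact (measurable_pi_apply i).div (Finset.measurable_sum _ fun j _ => measurable_pi_apply j)
  -- sum of chart coordinates is 1
  have hsum : ∀ x : Fin n → ℝ, ∑ i, chart x i = 1 := by
    intro x
    simp only [chart, Fin.sum_univ_castSucc, Fin.snoc_castSucc, Fin.snoc_last]
    ring
  -- chart⁻¹' E is Lebesgue-null
  have hchartE : volume (chart ⁻¹' E) = 0 := by
    have h1 : μP E = ENNReal.ofReal (Real.sqrt (n+1)) * volume (chart ⁻¹' E) := by
      rw [Measure.map_apply hchart hE]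
      rfl
    rw [h1] at hμP
    have h2 : (ENNReal.ofReal (Real.sqrt (n+1)) : ℝ≥0∞) ≠ 0 := by
      simp only [ne_eq, ENNReal.ofReal_eq_zero, not_le]
      positivity
    exact (mul_eq_zero.1 hμP).resolve_left h2
  -- the parametrization Φ and the set S
  set Φ : (Fin (n+1) → ℝ) → (Fin (n+1) → ℝ) :=
    fun z => (z (Fin.last n)) • chart (Fin.init z) with hΦdef
  set S : Set (Fin (n+1) → ℝ) :=
    {z | 0 < z (Fin.last n)} ∩ ((fun z => chart (Fin.init z)) ⁻¹' E) with hSdef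
  have hgE : MeasurableSet ((fun z : Fin (n+1) → ℝ => chart (Fin.init z)) ⁻¹' E) :=
    (hchart.comp hinit) hE
  have hS_meas : MeasurableSet S :=
    ((measurable_pi_apply (Fin.last n)) measurableSet_Ioi).inter hgE
  -- S is null
  have hSnull : volume S = 0 := by
    have hsub : S ⊆ (Fin.init : (Fin (n+1) → ℝ) → (Fin n → ℝ)) ⁻¹' (chart ⁻¹' E) := by
      intro z hz
      exact hz.2
    refine measure_mono_null hsub ?_
    set e := MeasurableEquiv.piFinSuccAbove (fun _ : Fin (n+1) => ℝ) (Fin.last n) with he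
    have hpre : (Fin.init : (Fin (n+1) → ℝ) → (Fin n → ℝ)) ⁻¹' (chart ⁻¹' E)
        = e ⁻¹' (Set.univ ×ˢ (chart ⁻¹' E)) := by
      ext z
      simp only [Set.mem_preimage, Set.mem_prod, Set.mem_univ, true_and, he,
        MeasurableEquiv.piFinSuccAbove_apply, Fin.insertNthEquiv, Fin.removeNth_last]
      exact Iff.rfl
    rw [hpre, (volume_preserving_piFinSuccAbove (fun _ : Fin (n+1) => ℝ)
      (Fin.last n)).measure_preimage (MeasurableSet.univ.prod (hchart hE)).nullMeasurableSet]
    rw [Measure.volume_eq_prod, Measure.prod_prod, hchartE, mul_zero]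
  -- Φ is differentiable
  have hcoord : ∀ i : Fin (n+1), Differentiable ℝ (fun z : Fin (n+1) → ℝ => z i) :=
    fun i => (ContinuousLinearMap.proj i : (Fin (n+1) → ℝ) →L[ℝ] ℝ).differentiable
  have hΦdiff : Differentiable ℝ Φ := by
    rw [differentiable_pi]
    intro i
    refine Fin.lastCases ?_ ?_ i
    · have : (fun z : Fin (n+1) → ℝ => Φ z (Fin.last n))
          = fun z => z (Fin.last n) * (1 - ∑ j : Fin n, z (Fin.castSucc j)) := by
        funext z
        simp only [hΦdef, Pi.smul_apply, smul_eq_mul, chart, Fin.snoc_last]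
        rfl
      rw [this]
      exact (hcoord _).mul ((differentiable_const 1).sub
        (Differentiable.fun_sum fun j _ => hcoord _))
    · intro j
      have : (fun z : Fin (n+1) → ℝ => Φ z (Fin.castSucc j))
          = fun z => z (Fin.last n) * z (Fin.castSucc j) := by
        funext z
        simp only [hΦdef, Pi.smul_apply, smul_eq_mul, chart, Fin.snoc_castSucc]
        rfl
      rw [this]
      exact (hcoord _).mul (hcoord _)
  -- the image identity
  have himage : H ⁻¹' E ∩ U = Φ '' S := by
    ext y
    constructor
    · rintro ⟨hyE, hyU⟩
      have hyU' : (0:ℝ) < ∑ i, y i := hyU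
      have ht : (∑ i, y i) ≠ 0 := ne_of_gt hyU'
      set z : Fin (n+1) → ℝ :=
        Fin.snoc (fun j : Fin n => H y (Fin.castSucc j)) (∑ i, y i) with hzdef
      have hinitz : Fin.init z = fun j : Fin n => H y (Fin.castSucc j) := Fin.init_snoc _ _
      have hxy : chart (Fin.init z) = H y := by
        rw [hinitz]
        funext i
        refine Fin.lastCases ?_ ?_ i
        · simp only [chart, Fin.snoc_last]
          have hsum' : ∑ j : Fin n, y (Fin.castSucc j) = (∑ i, y i) - y (Fin.last n) := by
            rw [Fin.sum_univ_castSucc (f := y)]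
            ring
          show 1 - ∑ j : Fin n, H y (Fin.castSucc j) = H y (Fin.last n)
          simp only [H]
          rw [← Finset.sum_div, hsum']
          field_simp
          ring
        · intro j
          simp [chart, Fin.snoc_castSucc]
      refine ⟨z, ⟨?_, ?_⟩, ?_⟩
      · show 0 < z (Fin.last n)
        simpa [hzdef, Fin.snoc_last] using hyU'
      · show chart (Fin.init z) ∈ E
        rw [hxy]
        exact hyE
      · show z (Fin.last n) • chart (Fin.init z) = y
        rw [hxy]
        have hzl : z (Fin.last n) = ∑ i, y i := by simp [hzdef, Fin.snoc_last]
        rw [hzl]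
        funext i
        simp only [Pi.smul_apply, smul_eq_mul, H]
        field_simp
    · rintro ⟨z, ⟨hz1, hz2⟩, rfl⟩
      have ht : z (Fin.last n) ≠ 0 := ne_of_gt hz1
      have hsumΦ : ∑ i, Φ z i = z (Fin.last n) := by
        simp only [hΦdef, Pi.smul_apply, smul_eq_mul]
        rw [← Finset.mul_sum, hsum (Fin.init z), mul_one]
      constructor
      · have hHΦ : H (Φ z) = chart (Fin.init z) := by
          funext i
          show Φ z i / ∑ j, Φ z j = chart (Fin.init z) i
          rw [hsumΦ]
          show z (Fin.last n) * chart (Fin.init z) i / z (Fin.last n) = chart (Fin.init z) i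
          exact mul_div_cancel_left₀ _ ht
        show H (Φ z) ∈ E
        rw [hHΦ]
        exact hz2
      · show (0:ℝ) < ∑ i, Φ z i
        rw [hsumΦ]
        exact hz1
  -- image of a null set under a differentiable map is null
  have himgnull : volume (Φ '' S) = 0 := by
    refine le_antisymm ?_ zero_le
    calc volume (Φ '' S)
        ≤ ∫⁻ x in S, ENNReal.ofReal |(fderiv ℝ Φ x).det| ∂volume :=
          addHaar_image_le_lintegral_abs_det_fderiv volume hS_meas
            (fun x _ => (hΦdiff x).hasFDerivAt.hasFDerivWithinAt)
      _ = 0 := setLIntegral_measure_zero _ _ hSnull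
  -- conclude
  rw [VectorMeasure.map_apply lam hH hE]
  refine hlam _ (hH hE) ?_
  rw [himage]
  exact himgnull
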